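/- Let a₁,…,a_n ∈ ℂ be distinct, let A = ∏_{j=1}^n (X − a_j), and let C ∈ ℂ[X]. Suppose y₁ ∈ ℂ[X] is a nonzero polynomial satisfying A·y₁″ − A′·y₁′ + C·y₁ = 0 and having no common complex root with A. Then there exists a polynomial y₂ ∈ ℂ[X] satisfying A·y₂″ − A′·y₂′ + C·y₂ = 0 such that y₁ and y₂ are linearly independent over ℂ. -/

import Mathlib

open Polynomial



lemma exists_antideriv (p : Polynomial ℂ) : ∃ q : Polynomial ℂ, derivative q = p := by
  induction p using Polynomial.induction_on' with
  | add f g hf hg =>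
    obtain ⟨qf, hqf⟩ := hf; obtain ⟨qg, hqg⟩ := hg
    exact ⟨qf + qg, by simp [hqf, hqg]⟩
  | monomial n c =>
    refine ⟨C (c / (n + 1)) * X ^ (n + 1), ?_⟩
    have hn : ((n : ℂ) + 1) ≠ 0 := Nat.cast_add_one_ne_zero n
    rw [derivative_C_mul, derivative_X_pow, ← mul_assoc, ← C_mul,
      Nat.add_sub_cancel]
    push_cast
    rw [div_mul_cancel₀ _ hn, C_mul_X_pow_eq_monomial]

lemma coprime_of_no_common_root {p q : Polynomial ℂ} (hp : p ≠ 0)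
    (h : ∀ z : ℂ, ¬ (p.IsRoot z ∧ q.IsRoot z)) : IsCoprime p q := by
  classical
  rw [← EuclideanDomain.gcd_isUnit_iff]
  by_contra hu
  have hdeg : (EuclideanDomain.gcd p q).degree ≠ 0 := fun h0 =>
    hu (Polynomial.isUnit_iff_degree_eq_zero.2 h0)
  obtain ⟨z, hz⟩ := Complex.isAlgClosed.exists_root _ hdeg
  exact h z ⟨hz.dvd (EuclideanDomain.gcd_dvd_left p q),
    hz.dvd (EuclideanDomain.gcd_dvd_right p q)⟩

lemma derivs_in_span (A Cp y : Polynomial ℂ)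
    (hode : A * derivative (derivative y) = derivative A * derivative y - Cp * y) :
    ∀ k : ℕ, ∃ f g : Polynomial ℂ,
      A ^ k * (derivative^[k] y) = f * y + g * derivative y := by
  intro k
  induction k with
  | zero => exact ⟨1, 0, by simp⟩
  | succ k ih =>
    obtain ⟨f, g, hk⟩ := ih
    have hd := congrArg derivative hk
    simp only [derivative_mul, derivative_add] at hd
    have hpow : A * derivative (A ^ k) = C (k : ℂ) * derivative A * A ^ k := by
      cases k with
      | zero => simp
      | succ m => rw [derivative_pow, Nat.add_sub_cancel, pow_succ]; push_cast; ring
    refine ⟨A * derivative f - g * Cp - C (k:ℂ) * derivative A * f,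
            A * f + A * derivative g + g * derivative A - C (k:ℂ) * derivative A * g, ?_⟩
    rw [Function.iterate_succ_apply', pow_succ]
    linear_combination A * hd - (derivative^[k] y) * hpow - C (k:ℂ) * derivative A * hk + g * hode

lemma no_double_root (A Cp y : Polynomial ℂ) (hy : y ≠ 0)
    (hode : A * derivative (derivative y) = derivative A * derivative y - Cp * y)
    (b : ℂ) (hAb : A.eval b ≠ 0) (h0 : y.eval b = 0) (h1 : (derivative y).eval b = 0) :
    False := by
  have hder : ∀ k : ℕ, (derivative^[k] y).eval b = 0 := by
    intro k
    obtain ⟨f, g, hk⟩ := derivs_in_span A Cp y hode k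
    have h2 := congrArg (eval b) hk
    simp only [eval_mul, eval_add, eval_pow, h0, h1, mul_zero, add_zero, zero_add] at h2
    rcases mul_eq_zero.1 h2 with h | h
    · exact absurd h (pow_ne_zero _ hAb)
    · exact h
  apply hy
  have ht : taylor b y = 0 := by
    ext k
    rw [taylor_coeff, coeff_zero]
    have h3 : derivative^[k] y = (Nat.factorial k) • hasseDeriv k y :=
      (congrFun (@factorial_smul_hasseDeriv ℂ _ k) y).symm
    have h4 := hder k
    rw [h3, nsmul_eq_mul] at h4
    simp only [eval_mul, eval_natCast] at h4
    rcases mul_eq_zero.1 h4 with h | h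
    · exact absurd h (by exact_mod_cast Nat.factorial_ne_zero k)
    · exact h
  have := taylor_injective b (ht.trans (map_zero (taylor b)).symm)
  exact this

lemma dvd_of_roots {p S : Polynomial ℂ} (hp : p ≠ 0) (hsep : p.Separable)
    (h : ∀ z : ℂ, p.IsRoot z → S.IsRoot z) : p ∣ S := by
  classical
  have hnd : p.roots.Nodup := Polynomial.nodup_roots hsep
  have hsplit : p = C p.leadingCoeff * (p.roots.map fun a => X - C a).prod :=
    (IsAlgClosed.splits p).eq_prod_roots
  set s : Finset ℂ := ⟨p.roots, hnd⟩ with hs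
  have hprod : (p.roots.map fun a => X - C a).prod = ∏ x ∈ s, (X - C x) := rfl
  have hd : (∏ x ∈ s, (X - C x)) ∣ S := by
    refine Finset.prod_dvd_of_coprime ?_ ?_
    · intro i _ j _ hij
      exact isCoprime_X_sub_C_of_isUnit_sub (sub_ne_zero.2 hij).isUnit
    · intro i hi
      refine dvd_iff_isRoot.2 (h i ?_)
      exact isRoot_of_mem_roots (by simpa [hs] using hi)
  rw [hsplit, hprod]
  exact (isUnit_C.2 (leadingCoeff_ne_zero.2 hp).isUnit).mul_left_dvd.2 hd

lemma sq_dvd_of {p S : Polynomial ℂ} (hcop : IsCoprime p (derivative p))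
    (h1 : p ∣ S) (h2 : p ∣ derivative S) : p ^ 2 ∣ S := by
  obtain ⟨t, rfl⟩ := h1
  rw [derivative_mul] at h2
  have h3 : p ∣ derivative p * t :=
    (dvd_add_right (Dvd.intro _ rfl)).mp (by rwa [add_comm] at h2)
  have h4 : p ∣ t := hcop.dvd_of_dvd_mul_left h3
  obtain ⟨t2, rfl⟩ := h4
  exact ⟨t2, by ring⟩

/-- **Lemma 4.** Let `A = ∏ (X - a_j)` with `a_j` distinct. If the equation
`A y'' - A' y' + C y = 0` has a nonzero polynomial solution `y₁` sharing no root
with `A`, then it has a polynomial solution `y₂` linearly independent from `y₁`. -/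
theorem second_polynomial_solution
    (n : ℕ) (a : Fin n → ℂ) (ha : Function.Injective a)
    (Cp : Polynomial ℂ) (y₁ : Polynomial ℂ) (hy₁ : y₁ ≠ 0)
    (heq : (∏ j, (X - C (a j))) * derivative (derivative y₁)
        - derivative (∏ j, (X - C (a j))) * derivative y₁ + Cp * y₁ = 0)
    (hcop : ∀ z : ℂ, ¬ (y₁.IsRoot z ∧ (∏ j, (X - C (a j))).IsRoot z)) :
    ∃ y₂ : Polynomial ℂ,
      (∏ j, (X - C (a j))) * derivative (derivative y₂)
        - derivative (∏ j, (X - C (a j))) * derivative y₂ + Cp * y₂ = 0 ∧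
      LinearIndependent ℂ ![y₁, y₂] := by
  classical
  set A : Polynomial ℂ := ∏ j, (X - C (a j)) with hAdef
  have hode : A * derivative (derivative y₁) = derivative A * derivative y₁ - Cp * y₁ := by
    linear_combination heq
  have hAne : A ≠ 0 := (monic_prod_of_monic _ _ fun j _ => monic_X_sub_C (a j)).ne_zero
  have hAb : ∀ b : ℂ, y₁.IsRoot b → A.eval b ≠ 0 := fun b hb hz => hcop b ⟨hb, hz⟩
  have hcopd : IsCoprime y₁ (derivative y₁) := by
    refine coprime_of_no_common_root hy₁ ?_
    rintro z ⟨h0, h1⟩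
    exact no_double_root A Cp y₁ hy₁ hode z (hAb z h0) h0 h1
  have hsep : y₁.Separable := hcopd
  obtain ⟨u, v, huv⟩ := hcopd
  set p : Polynomial ℂ := -(A * v) with hpdef
  set S : Polynomial ℂ := A - (y₁ * derivative p - derivative y₁ * p) with hSdef
  have hvz : ∀ z : ℂ, y₁.IsRoot z → eval z v * eval z (derivative y₁) = 1 := by
    intro z hz
    have h1 := congrArg (eval z) huv
    simp only [eval_add, eval_mul, eval_one, hz.eq_zero, mul_zero, zero_add] at h1
    exact h1
  have hSroot : ∀ z : ℂ, y₁.IsRoot z → S.IsRoot z := by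
    intro z hz
    have hv := hvz z hz
    show eval z S = 0
    rw [hSdef, hpdef]
    simp only [eval_sub, eval_mul, eval_neg, hz.eq_zero, zero_mul, zero_sub, neg_mul, mul_neg,
      neg_neg]
    linear_combination (-(eval z A)) * hv
  have hS'root : ∀ z : ℂ, y₁.IsRoot z → (derivative S).IsRoot z := by
    intro z hz
    have hv := hvz z hz
    have hodez := congrArg (eval z) hode
    simp only [eval_sub, eval_mul, hz.eq_zero, mul_zero, sub_zero] at hodez
    show eval z (derivative S) = 0
    rw [hSdef, hpdef]
    simp only [derivative_sub, derivative_mul, derivative_neg, eval_sub, eval_add, eval_mul,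
      eval_neg, hz.eq_zero, zero_mul, mul_zero, zero_sub, sub_zero, neg_neg, mul_neg, neg_mul]
    linear_combination (-(eval z v)) * hodez - (eval z (derivative A)) * hv
  obtain ⟨g, hg⟩ := sq_dvd_of ⟨u, v, huv⟩ (dvd_of_roots hy₁ hsep hSroot)
    (dvd_of_roots hy₁ hsep hS'root)
  obtain ⟨q, hq⟩ := exists_antideriv g
  have hW : y₁ * derivative (p + y₁ * q) - derivative y₁ * (p + y₁ * q) = A := by
    simp only [derivative_add, derivative_mul]
    linear_combination hSdef + y₁ ^ 2 * hq - hg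
  refine ⟨p + y₁ * q, ?_, ?_⟩
  · have hW' := congrArg derivative hW
    simp only [derivative_sub, derivative_mul] at hW'
    have hmain : y₁ * (A * derivative (derivative (p + y₁ * q))
        - derivative A * derivative (p + y₁ * q) + Cp * (p + y₁ * q)) = 0 := by
      linear_combination A * hW' - derivative A * hW + (p + y₁ * q) * heq
    rcases mul_eq_zero.1 hmain with h | h
    · exact absurd h hy₁
    · exact h
  · rw [LinearIndependent.pair_iff]
    intro s t hst
    rw [smul_eq_C_mul, smul_eq_C_mul] at hst
    have hst' := congrArg derivative hst
    simp only [derivative_add, derivative_mul, derivative_C, zero_mul, zero_add,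
      derivative_zero] at hst'
    have hW2 := hW
    simp only [derivative_add, derivative_mul] at hW2
    have hAz : Polynomial.C t * A = 0 := by
      linear_combination y₁ * hst' - derivative y₁ * hst - Polynomial.C t * hW2
    have ht : t = 0 := by
      rcases mul_eq_zero.1 hAz with h | h
      · exact_mod_cast C_eq_zero.1 h
      · exact absurd h hAne
    refine ⟨?_, ht⟩
    rw [ht, map_zero, zero_mul, add_zero] at hst
    rcases mul_eq_zero.1 hst with h | h
    · exact_mod_cast C_eq_zero.1 h
    · exact absurd h hy₁
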